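/- Let F be a field of characteristic different from 2, let n ≥ 1, let c₁,…,c_n ∈ F, and let x₁,…,x_n ∈ F be nonzero. Then the 2n×2n matrix M = [[0, diag(c₁,…,c_n)],[diag(c₁x₁,…,c_nx_n), 0]], regarded as an F-linear endomorphism of F^{2n}, is semisimple: every M-invariant subspace of F^{2n} has an M-invariant complement. -/

import Mathlib

noncomputable section

open Matrix
open Polynomial Finset

/-- in characteristic `≠ 2`, with `x₁,…,xₙ` nonzero, the matrix
`M = [[0, diag(cᵢ)],[diag(cᵢxᵢ), 0]]`, viewed as a linear endomorphism of `F^{2n}`,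
is semisimple: every `M`-invariant subspace has an `M`-invariant complement. -/
theorem cartan_element_semisimple {F : Type*} [Field F] (h2 : (2 : F) ≠ 0)
    {n : ℕ} (hn : 1 ≤ n) (c x : Fin n → F) (hx : ∀ i, x i ≠ 0) :
    ∀ W : Submodule F ((Fin n ⊕ Fin n) → F),
      (∀ w ∈ W, Matrix.toLin'
          (Matrix.fromBlocks 0 (Matrix.diagonal c)
            (Matrix.diagonal fun i => c i * x i) 0) w ∈ W) →
      ∃ W' : Submodule F ((Fin n ⊕ Fin n) → F),
        (∀ w ∈ W', Matrix.toLin'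
            (Matrix.fromBlocks 0 (Matrix.diagonal c)
              (Matrix.diagonal fun i => c i * x i) 0) w ∈ W') ∧
        IsCompl W W' := by
  classical
  set M : Matrix (Fin n ⊕ Fin n) (Fin n ⊕ Fin n) F :=
    Matrix.fromBlocks 0 (Matrix.diagonal c) (Matrix.diagonal fun i => c i * x i) 0 with hMdef
  set f : Module.End F ((Fin n ⊕ Fin n) → F) := Matrix.toLin' M with hfdef
  -- the eigenvalue-square function
  set e : Fin n → F := fun i => c i * (c i * x i) with he
  set d : Fin n ⊕ Fin n → F := Sum.elim e e with hd
  set S : Finset F := (Finset.image e Finset.univ).erase 0 with hS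
  have h0S : (0 : F) ∉ S := Finset.notMem_erase _ _
  -- M squared is diagonal
  have hM2 : M * M = Matrix.diagonal d := by
    rw [hMdef, Matrix.fromBlocks_multiply]
    simp [Matrix.diagonal_mul_diagonal, hd, he, mul_comm]
  -- the polynomial
  set P : F[X] := X * ∏ a ∈ S, (X ^ 2 - C a) with hP
  have hsep : P.Separable := by
    have h1 : ∀ a ∈ S, IsCoprime (X : F[X]) (X ^ 2 - C a) := by
      intro a ha
      have ha0 : a ≠ 0 := Finset.ne_of_mem_erase ha
      refine ⟨C a⁻¹ * X, -C a⁻¹, ?_⟩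
      have : (C a⁻¹ : F[X]) * C a = 1 := by
        rw [← C_mul, inv_mul_cancel₀ ha0, C_1]
      linear_combination this
    have h2' : ∀ a ∈ S, ∀ b ∈ S, a ≠ b → IsCoprime ((X:F[X]) ^ 2 - C a) (X ^ 2 - C b) := by
      intro a _ b _ hab
      refine ⟨-C (a - b)⁻¹, C (a - b)⁻¹, ?_⟩
      have hba : a - b ≠ 0 := sub_ne_zero.mpr hab
      have : (C (a - b)⁻¹ : F[X]) * C (a - b) = 1 := by
        rw [← C_mul, inv_mul_cancel₀ hba, C_1]
      rw [C_sub] at this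
      linear_combination this
    refine Polynomial.Separable.mul separable_X ?_ ?_
    · exact Polynomial.separable_prod' h2' fun a ha =>
        Polynomial.separable_X_pow_sub_C a (by norm_num [h2]) (Finset.ne_of_mem_erase ha)
    · exact IsCoprime.prod_right fun a ha => h1 a ha
  -- key zero-product fact
  have hprod : ∀ i : Fin n, c i ≠ 0 → ∏ a ∈ S, (e i - a) = 0 := by
    intro i hci
    refine Finset.prod_eq_zero (i := e i) ?_ (by ring)
    refine Finset.mem_erase.2 ⟨?_, Finset.mem_image_of_mem e (Finset.mem_univ i)⟩
    simp only [he]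
    exact mul_ne_zero hci (mul_ne_zero hci (hx i))
  -- M is annihilated by P
  have hann : Polynomial.aeval M P = 0 := by
    have hfactor : ∀ a : F, Polynomial.aeval M ((X:F[X]) ^ 2 - C a)
        = Matrix.diagonal (fun j => d j - a) := by
      intro a
      rw [map_sub, map_pow, Polynomial.aeval_X, Polynomial.aeval_C, pow_two, hM2]
      rw [Matrix.algebraMap_eq_diagonal]
      rw [Matrix.diagonal_sub]
      rfl
    have hProdM : ∀ s : Finset F, Polynomial.aeval M (∏ a ∈ s, ((X:F[X]) ^ 2 - C a))
        = Matrix.diagonal (fun j => ∏ a ∈ s, (d j - a)) := by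
      intro s
      induction s using Finset.induction_on with
      | empty => simp
      | insert _ _ hnm ih =>
        rw [Finset.prod_insert hnm, _root_.map_mul, hfactor, ih,
          Matrix.diagonal_mul_diagonal]
        refine congrArg Matrix.diagonal (funext fun j => ?_)
        rw [Finset.prod_insert hnm]
    rw [hP, _root_.map_mul, Polynomial.aeval_X, hProdM]
    ext j k
    rw [Matrix.mul_diagonal, Matrix.zero_apply]
    rcases k with k | k
    · rcases j with j | j
      · simp [hMdef]
      · by_cases hck : c k = 0
        · rcases eq_or_ne j k with rfl | hjk
          · simp [hMdef, hck]
          · simp [hMdef, Matrix.diagonal_apply_ne _ hjk]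
        · have : ∏ a ∈ S, (d (Sum.inl k) - a) = 0 := hprod k hck
          rw [this, mul_zero]
    · rcases j with j | j
      · by_cases hck : c k = 0
        · rcases eq_or_ne j k with rfl | hjk
          · simp [hMdef, hck]
          · simp [hMdef, Matrix.diagonal_apply_ne _ hjk]
        · have : ∏ a ∈ S, (d (Sum.inr k) - a) = 0 := hprod k hck
          rw [this, mul_zero]
      · simp [hMdef]
  have hannf : Polynomial.aeval f P = 0 := by
    have : f = Matrix.toLinAlgEquiv' M := rfl
    rw [this]
    show Polynomial.aeval (Matrix.toLinAlgEquiv'.toAlgHom M) P = 0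
    rw [Polynomial.aeval_algHom_apply, hann, map_zero]
  have hss : f.IsSemisimple :=
    Module.End.isSemisimple_of_squarefree_aeval_eq_zero hsep.squarefree hannf
  intro W hW
  rw [Module.End.isSemisimple_iff] at hss
  obtain ⟨q, hq1, hq2⟩ := hss W (fun w hw => hW w hw)
  exact ⟨q, fun w hw => hq1 hw, hq2⟩
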